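/- Let α < 0, A > 0, B > 0 and k > 0, and define F(x) = [1 + k x^{−A} exp(−Bx)]^{1/α} for x ∈ (0, +∞). Then F is the cumulative distribution function of a positive absolutely continuous random variable (it is continuous, nondecreasing, with lim_{x→0⁺} F(x) = 0 and lim_{x→+∞} F(x) = 1), F is differentiable on (0, +∞) with derivative f, and its α-generalized reversed aging intensity function is linear: L̆_α(x) = A + Bx for all x > 0. -/

import Mathlib

set_option maxHeartbeats 1000000


/-- The α-generalized reversed aging intensity function. -/
noncomputable def genRAI (F f : ℝ → ℝ) (α x : ℝ) : ℝ :=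
  if α = 0 then -(x * f x) / (F x * Real.log (F x))
  else α * x * F x ^ (α - 1) * f x / (1 - F x ^ α)

/-- The cdf `F(x) = [1 + k x^(-A) exp(-Bx)]^(1/α)` arising from the linear reversed
aging intensity `L̆_α(x) = A + Bx` for `α < 0`. -/
noncomputable def Flin (α A B k : ℝ) (x : ℝ) : ℝ :=
  (1 + k * x ^ (-A) * Real.exp (-(B * x))) ^ (1/α)

/-- For `α < 0`, `A, B > 0` and `k > 0`, `F(x) = [1 + k x^(-A) exp(-Bx)]^(1/α)` is the
cdf of a positive absolutely continuous random variable (continuous, nondecreasing on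
`(0,∞)`, with limits `0` at `0⁺` and `1` at `+∞`), it is differentiable on `(0,∞)`
with derivative `f`, and its α-generalized reversed aging intensity is linear:
`L̆_α(x) = A + Bx` for all `x > 0`. -/
theorem stmt_14 (α A B k : ℝ) (hα : α < 0) (hA : 0 < A) (hB : 0 < B) (hk : 0 < k) :
    ContinuousOn (Flin α A B k) (Set.Ioi 0) ∧
    MonotoneOn (Flin α A B k) (Set.Ioi 0) ∧
    Filter.Tendsto (Flin α A B k) (nhdsWithin (0:ℝ) (Set.Ioi 0)) (nhds 0) ∧
    Filter.Tendsto (Flin α A B k) Filter.atTop (nhds 1) ∧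
    ∃ f : ℝ → ℝ, (∀ x > (0:ℝ), HasDerivAt (Flin α A B k) (f x) x) ∧
      ∀ x > (0:ℝ), genRAI (Flin α A B k) f α x = A + B * x := by
  have hα0 : α ≠ 0 := hα.ne
  -- positivity of the inner function
  have hgpos : ∀ x : ℝ, 0 < x → 0 < 1 + k * x ^ (-A) * Real.exp (-(B * x)) := by
    intro x hx
    have : 0 < k * x ^ (-A) * Real.exp (-(B * x)) := by positivity
    linarith
  have hcpos : ∀ x : ℝ, 0 < x → 0 < k * x ^ (-A) * Real.exp (-(B * x)) := by
    intro x hx; positivity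
  refine ⟨?_, ?_, ?_, ?_, ?_⟩
  · -- continuity
    apply ContinuousOn.rpow_const
    · apply ContinuousOn.add continuousOn_const
      apply ContinuousOn.mul
      · exact continuousOn_const.mul (ContinuousOn.rpow_const continuousOn_id
          (fun x hx => Or.inl (ne_of_gt hx)))
      · exact (Real.continuous_exp.comp ((continuous_const.mul continuous_id).neg)).continuousOn
    · intro x hx
      exact Or.inl (ne_of_gt (hgpos x hx))
  · -- monotone
    intro x hx y hy hxy
    simp only [Flin]
    apply Real.rpow_le_rpow_of_nonpos (hgpos y hy)
    · have h1 : y ^ (-A) ≤ x ^ (-A) :=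
        Real.rpow_le_rpow_of_nonpos hx hxy (neg_nonpos.mpr hA.le)
      have h2 : Real.exp (-(B * y)) ≤ Real.exp (-(B * x)) := by
        apply Real.exp_le_exp.mpr; nlinarith
      have h3 : k * y ^ (-A) * Real.exp (-(B * y)) ≤ k * x ^ (-A) * Real.exp (-(B * x)) := by
        apply mul_le_mul (mul_le_mul_of_nonneg_left h1 hk.le) h2 (Real.exp_pos _).le
        have : (0:ℝ) < x ^ (-A) := Real.rpow_pos_of_pos hx _
        positivity
      linarith
    · exact le_of_lt (by rw [one_div]; exact inv_neg''.mpr hα)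
  · -- limit at 0⁺
    have l0 : Filter.Tendsto (fun x : ℝ => x ^ A) (nhdsWithin 0 (Set.Ioi 0))
        (nhdsWithin 0 (Set.Ioi 0)) := by
      rw [tendsto_nhdsWithin_iff]
      constructor
      · have := (Real.continuousAt_rpow_const 0 A (Or.inr hA.le)).tendsto
        rw [Real.zero_rpow hA.ne'] at this
        exact this.mono_left nhdsWithin_le_nhds
      · filter_upwards [self_mem_nhdsWithin] with x hx
        exact Real.rpow_pos_of_pos hx _
    have l1 : Filter.Tendsto (fun x : ℝ => x ^ (-A)) (nhdsWithin 0 (Set.Ioi 0))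
        Filter.atTop := by
      apply Filter.Tendsto.congr' _ (tendsto_inv_nhdsGT_zero.comp l0)
      filter_upwards [self_mem_nhdsWithin] with x hx
      simp [Function.comp, Real.rpow_neg (le_of_lt hx)]
    have l2 : Filter.Tendsto (fun x : ℝ => 1 + k * x ^ (-A) * Real.exp (-(B * x)))
        (nhdsWithin 0 (Set.Ioi 0)) Filter.atTop := by
      apply Filter.tendsto_atTop_add_const_left
      apply Filter.Tendsto.atTop_mul_pos (one_pos) (Filter.Tendsto.const_mul_atTop hk l1)
      have hcont : Continuous fun x : ℝ => Real.exp (-(B * x)) := by continuity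
      have : Filter.Tendsto (fun x : ℝ => Real.exp (-(B * x))) (nhds 0) (nhds 1) := by
        simpa using hcont.tendsto 0
      exact this.mono_left nhdsWithin_le_nhds
    have l3 : Filter.Tendsto (fun t : ℝ => t ^ (1/α)) Filter.atTop (nhds 0) := by
      have := tendsto_rpow_neg_atTop (y := -(1/α))
        (by rw [one_div]; exact neg_pos.mpr (inv_neg''.mpr hα))
      simpa using this
    exact l3.comp l2
  · -- limit at ∞
    have l1 : Filter.Tendsto (fun x : ℝ => 1 + k * x ^ (-A) * Real.exp (-(B * x)))
        Filter.atTop (nhds 1) := by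
      have h1 : Filter.Tendsto (fun x : ℝ => k * x ^ (-A)) Filter.atTop (nhds (k * 0)) :=
        (tendsto_rpow_neg_atTop hA).const_mul k
      have h2 : Filter.Tendsto (fun x : ℝ => Real.exp (-(B * x))) Filter.atTop (nhds 0) := by
        apply Real.tendsto_exp_atBot.comp
        exact Filter.tendsto_neg_atBot_iff.mpr (Filter.Tendsto.const_mul_atTop hB Filter.tendsto_id)
      have := (h1.mul h2).const_add 1
      simpa using this
    have l2 : Filter.Tendsto (fun t : ℝ => t ^ (1/α)) (nhds 1) (nhds 1) := by
      have := (Real.continuousAt_rpow_const 1 (1/α) (Or.inl one_ne_zero)).tendsto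
      rwa [Real.one_rpow] at this
    exact l2.comp l1
  · -- derivative and genRAI
    refine ⟨fun x => (k * (-A * x ^ (-A - 1)) * Real.exp (-(B * x)) +
        k * x ^ (-A) * (Real.exp (-(B * x)) * -(B * 1))) * (1/α) *
        (1 + k * x ^ (-A) * Real.exp (-(B * x))) ^ (1/α - 1), ?_, ?_⟩
    · intro x hx
      have h1 : HasDerivAt (fun y : ℝ => y ^ (-A)) (-A * x ^ (-A - 1)) x :=
        Real.hasDerivAt_rpow_const (Or.inl hx.ne')
      have h2 := h1.const_mul k
      have hlin : HasDerivAt (fun y : ℝ => -(B * y)) (-(B * 1)) x := by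
        simpa using ((hasDerivAt_id x).const_mul B).fun_neg
      have hexp : HasDerivAt (fun y : ℝ => Real.exp (-(B * y)))
          (Real.exp (-(B * x)) * -(B * 1)) x := hlin.exp
      have hprod := h2.mul hexp
      have hg := hprod.const_add 1
      have hF := hg.rpow_const (p := 1/α) (Or.inl (ne_of_gt (hgpos x hx)))
      exact hF
    · intro x hx
      have hgx := hgpos x hx
      have hcx := hcpos x hx
      simp only [genRAI, if_neg hα0, Flin]
      have hFα : ((1 + k * x ^ (-A) * Real.exp (-(B * x))) ^ (1/α)) ^ α
          = 1 + k * x ^ (-A) * Real.exp (-(B * x)) := by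
        rw [← Real.rpow_mul hgx.le, one_div, inv_mul_cancel₀ hα0, Real.rpow_one]
      have hpow : ((1 + k * x ^ (-A) * Real.exp (-(B * x))) ^ (1/α)) ^ (α - 1) *
          (1 + k * x ^ (-A) * Real.exp (-(B * x))) ^ (1/α - 1) = 1 := by
        rw [← Real.rpow_mul hgx.le, ← Real.rpow_add hgx]
        have : 1/α * (α - 1) + (1/α - 1) = 0 := by field_simp; ring
        rw [this, Real.rpow_zero]
      have hxA : x ^ (-A - 1) * x = x ^ (-A) := by
        rw [← Real.rpow_add_one hx.ne' (-A - 1)]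
        norm_num
      rw [hFα, div_eq_iff (by linarith : 1 - (1 + k * x ^ (-A) * Real.exp (-(B * x))) ≠ 0)]
      have hαα : α * (1/α) = 1 := by field_simp
      linear_combination (α * (1/α) * x * (k * (-A * x ^ (-A - 1)) * Real.exp (-(B * x)) +
          k * x ^ (-A) * (Real.exp (-(B * x)) * -(B * 1)))) * hpow +
        (-(A * k * Real.exp (-(B * x)))) * hxA +
        (x * (k * (-A * x ^ (-A - 1)) * Real.exp (-(B * x)) +
          k * x ^ (-A) * (Real.exp (-(B * x)) * -(B * 1)))) * hαα
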